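/- Let ξ > 0 be such that D_ξ := DᵀD − ξ²I is invertible, let ω ∈ ℝ, and let a_1,…,a_m ∈ ℂ be arbitrary complex numbers. Define Ã := iωI − A_0 − Σ_{i=1}^m A_i a_i ∈ ℂ^{n×n}, assume Ã is invertible, and set G̃ := C Ã⁻¹ B + D ∈ ℂ^{n_y×n_u}. Define Ĥ := iωI − M_0 − Σ_{i=1}^m (M_i a_i + M_{−i} conj(a_i)) ∈ ℂ^{2n×2n}. Then det(G̃* G̃ − ξ² I) = 0 if and only if det Ĥ = 0; moreover det Ĥ · det D_ξ = det(G̃* G̃ − ξ² I) · det Ã · det(−Ã*). -/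

import Mathlib

open Matrix Complex

noncomputable section

variable {n nu ny m : ℕ}

/-- `D_ξ = Dᵀ D − ξ² I`. -/
def Dxi (D : Matrix (Fin ny) (Fin nu) ℝ) (ξ : ℝ) : Matrix (Fin nu) (Fin nu) ℝ :=
  Dᵀ * D - ξ ^ 2 • (1 : Matrix (Fin nu) (Fin nu) ℝ)

/-- `(Dᵀ)_ξ = D Dᵀ − ξ² I`, the matrix denoted `D_ξ^{-T}`-inverse base in the paper
(the only dimensionally consistent reading of the `(2,1)` block of `M₀`).
Note that it is invertible iff `D_ξ` is (for `ξ ≠ 0`), since `DᵀD` and `DDᵀ` have the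
same nonzero eigenvalues. -/
def DxiT (D : Matrix (Fin ny) (Fin nu) ℝ) (ξ : ℝ) : Matrix (Fin ny) (Fin ny) ℝ :=
  D * Dᵀ - ξ ^ 2 • (1 : Matrix (Fin ny) (Fin ny) ℝ)

/-- The block matrix `M₀`. -/
def Mzero (A0 : Matrix (Fin n) (Fin n) ℝ) (B : Matrix (Fin n) (Fin nu) ℝ)
    (C : Matrix (Fin ny) (Fin n) ℝ) (D : Matrix (Fin ny) (Fin nu) ℝ) (ξ : ℝ) :
    Matrix (Fin n ⊕ Fin n) (Fin n ⊕ Fin n) ℝ :=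
  fromBlocks (A0 - B * (Dxi D ξ)⁻¹ * Dᵀ * C) (-(B * (Dxi D ξ)⁻¹ * Bᵀ))
    (ξ ^ 2 • (Cᵀ * (DxiT D ξ)⁻¹ * C)) (-A0ᵀ + Cᵀ * D * (Dxi D ξ)⁻¹ * Bᵀ)

/-- The block matrix `Mᵢ` for `1 ≤ i ≤ m`. -/
def Mpos (Ai : Matrix (Fin n) (Fin n) ℝ) : Matrix (Fin n ⊕ Fin n) (Fin n ⊕ Fin n) ℝ :=
  fromBlocks Ai 0 0 0

/-- The block matrix `M₋ᵢ` for `1 ≤ i ≤ m`. -/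
def Mneg (Ai : Matrix (Fin n) (Fin n) ℝ) : Matrix (Fin n ⊕ Fin n) (Fin n ⊕ Fin n) ℝ :=
  fromBlocks 0 0 0 (-Aiᵀ)

/-- `H_ξ(λ) = λI − M₀ − Σᵢ (Mᵢ e^{−λτᵢ} + M₋ᵢ e^{λτᵢ})`. -/
def Hxi (A0 : Matrix (Fin n) (Fin n) ℝ) (A : Fin m → Matrix (Fin n) (Fin n) ℝ)
    (B : Matrix (Fin n) (Fin nu) ℝ) (C : Matrix (Fin ny) (Fin n) ℝ)
    (D : Matrix (Fin ny) (Fin nu) ℝ) (τ : Fin m → ℝ) (ξ : ℝ) (lam : ℂ) :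
    Matrix (Fin n ⊕ Fin n) (Fin n ⊕ Fin n) ℂ :=
  lam • (1 : Matrix (Fin n ⊕ Fin n) (Fin n ⊕ Fin n) ℂ)
    - (Mzero A0 B C D ξ).map Complex.ofReal
    - ∑ i : Fin m, (Complex.exp (-lam * (τ i : ℂ)) • (Mpos (A i)).map Complex.ofReal
        + Complex.exp (lam * (τ i : ℂ)) • (Mneg (A i)).map Complex.ofReal)

/-- `A(λ) = λI − A₀ − Σᵢ Aᵢ e^{−λτᵢ}`. -/
def Amat (A0 : Matrix (Fin n) (Fin n) ℝ) (A : Fin m → Matrix (Fin n) (Fin n) ℝ)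
    (τ : Fin m → ℝ) (lam : ℂ) : Matrix (Fin n) (Fin n) ℂ :=
  lam • (1 : Matrix (Fin n) (Fin n) ℂ) - A0.map Complex.ofReal
    - ∑ i : Fin m, Complex.exp (-lam * (τ i : ℂ)) • (A i).map Complex.ofReal

/-- The transfer function `G(λ) = C A(λ)⁻¹ B + D`. -/
def Gmat (A0 : Matrix (Fin n) (Fin n) ℝ) (A : Fin m → Matrix (Fin n) (Fin n) ℝ)
    (B : Matrix (Fin n) (Fin nu) ℝ) (C : Matrix (Fin ny) (Fin n) ℝ)
    (D : Matrix (Fin ny) (Fin nu) ℝ) (τ : Fin m → ℝ) (lam : ℂ) :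
    Matrix (Fin ny) (Fin nu) ℂ :=
  C.map Complex.ofReal * (Amat A0 A τ lam)⁻¹ * B.map Complex.ofReal + D.map Complex.ofReal

/-- `τ_max`, the maximum of the delays. -/
def tauMax [NeZero m] (τ : Fin m → ℝ) : ℝ :=
  Finset.univ.sup' Finset.univ_nonempty τ

/-- `λ` is an eigenvalue of the infinite-dimensional operator `L_ξ`: there is a continuously
differentiable, not identically zero function `u : [−τ_max, τ_max] → ℂ^{2n}` with
`u′(t) = λ u(t)` on the interval and `u′(0) = M₀ u(0) + Σᵢ (Mᵢ u(−τᵢ) + M₋ᵢ u(τᵢ))`. -/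
def IsEigLxi [NeZero m] (A0 : Matrix (Fin n) (Fin n) ℝ) (A : Fin m → Matrix (Fin n) (Fin n) ℝ)
    (B : Matrix (Fin n) (Fin nu) ℝ) (C : Matrix (Fin ny) (Fin n) ℝ)
    (D : Matrix (Fin ny) (Fin nu) ℝ) (τ : Fin m → ℝ) (ξ : ℝ) (lam : ℂ) : Prop :=
  ∃ u : ℝ → (Fin n ⊕ Fin n → ℂ),
    (∀ t ∈ Set.Icc (-(tauMax τ)) (tauMax τ),
      HasDerivWithinAt u (lam • u t) (Set.Icc (-(tauMax τ)) (tauMax τ)) t) ∧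
    (∃ t ∈ Set.Icc (-(tauMax τ)) (tauMax τ), u t ≠ 0) ∧
    lam • u 0 = (Mzero A0 B C D ξ).map Complex.ofReal *ᵥ u 0
      + ∑ i : Fin m, ((Mpos (A i)).map Complex.ofReal *ᵥ u (-(τ i))
          + (Mneg (A i)).map Complex.ofReal *ᵥ u (τ i))


/-- `Ã = iωI − A₀ − Σᵢ Aᵢ aᵢ`. -/
def AmatGen (A0 : Matrix (Fin n) (Fin n) ℝ) (A : Fin m → Matrix (Fin n) (Fin n) ℝ)
    (a : Fin m → ℂ) (ω : ℝ) : Matrix (Fin n) (Fin n) ℂ :=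
  (Complex.I * ω) • (1 : Matrix (Fin n) (Fin n) ℂ) - A0.map Complex.ofReal
    - ∑ i : Fin m, a i • (A i).map Complex.ofReal

/-- `G̃ = C Ã⁻¹ B + D`. -/
def GmatGen (A0 : Matrix (Fin n) (Fin n) ℝ) (A : Fin m → Matrix (Fin n) (Fin n) ℝ)
    (B : Matrix (Fin n) (Fin nu) ℝ) (C : Matrix (Fin ny) (Fin n) ℝ)
    (D : Matrix (Fin ny) (Fin nu) ℝ) (a : Fin m → ℂ) (ω : ℝ) :
    Matrix (Fin ny) (Fin nu) ℂ :=
  C.map Complex.ofReal * (AmatGen A0 A a ω)⁻¹ * B.map Complex.ofReal + D.map Complex.ofReal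

/-- `Ĥ = iωI − M₀ − Σᵢ (Mᵢ aᵢ + M₋ᵢ conj(aᵢ))`. -/
def HhatGen (A0 : Matrix (Fin n) (Fin n) ℝ) (A : Fin m → Matrix (Fin n) (Fin n) ℝ)
    (B : Matrix (Fin n) (Fin nu) ℝ) (C : Matrix (Fin ny) (Fin n) ℝ)
    (D : Matrix (Fin ny) (Fin nu) ℝ) (ξ : ℝ) (a : Fin m → ℂ) (ω : ℝ) :
    Matrix (Fin n ⊕ Fin n) (Fin n ⊕ Fin n) ℂ :=
  (Complex.I * ω) • (1 : Matrix (Fin n ⊕ Fin n) (Fin n ⊕ Fin n) ℂ)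
    - (Mzero A0 B C D ξ).map Complex.ofReal
    - ∑ i : Fin m, (a i • (Mpos (A i)).map Complex.ofReal
        + (starRingEnd ℂ) (a i) • (Mneg (A i)).map Complex.ofReal)

-- map helpers
section MapLemmas
variable {p q r : Type*} [Fintype q]
lemma mapC_mul (M : Matrix p q ℝ) (N : Matrix q r ℝ) :
    (M * N).map Complex.ofReal = M.map Complex.ofReal * N.map Complex.ofReal :=
  Matrix.map_mul (f := Complex.ofRealHom)
lemma mapC_sub (M N : Matrix p r ℝ) :
    (M - N).map Complex.ofReal = M.map Complex.ofReal - N.map Complex.ofReal := by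
  ext i j; simp
lemma mapC_add (M N : Matrix p r ℝ) :
    (M + N).map Complex.ofReal = M.map Complex.ofReal + N.map Complex.ofReal := by
  ext i j; simp
lemma mapC_neg (M : Matrix p r ℝ) :
    (-M).map Complex.ofReal = -(M.map Complex.ofReal) := by
  ext i j; simp
lemma mapC_smul (c : ℝ) (M : Matrix p r ℝ) :
    (c • M).map Complex.ofReal = (c : ℂ) • M.map Complex.ofReal := by
  ext i j; simp
lemma mapC_zero : ((0 : Matrix p r ℝ)).map Complex.ofReal = 0 := by ext i j; simp
lemma mapC_one [DecidableEq p] : ((1 : Matrix p p ℝ)).map Complex.ofReal = 1 := by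
  ext i j; by_cases h : i = j <;> simp [Matrix.one_apply, h]
lemma mapC_conjT (M : Matrix p r ℝ) :
    (M.map Complex.ofReal)ᴴ = Mᵀ.map Complex.ofReal := by
  ext i j; simp [conjTranspose_apply, Complex.conj_ofReal]
end MapLemmas

lemma sum_fromBlocks {R : Type*} [AddCommMonoid R] {ι : Type*} (s : Finset ι)
    (f g h k : ι → Matrix (Fin n) (Fin n) R) :
    ∑ i ∈ s, fromBlocks (f i) (g i) (h i) (k i)
      = fromBlocks (∑ i ∈ s, f i) (∑ i ∈ s, g i) (∑ i ∈ s, h i) (∑ i ∈ s, k i) := by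
  ext (i | i) (j | j) <;> simp [Matrix.sum_apply]

lemma fromBlocks_sub {R : Type*} [AddGroup R] {p q r s : Type*}
    (A A' : Matrix p r R) (B B' : Matrix p s R) (C C' : Matrix q r R) (D D' : Matrix q s R) :
    fromBlocks A B C D - fromBlocks A' B' C' D'
      = fromBlocks (A - A') (B - B') (C - C') (D - D') := by
  ext (i | i) (j | j) <;> simp

lemma dxit_inv_smul (D : Matrix (Fin ny) (Fin nu) ℝ) {ξ : ℝ} (hξ : ξ ≠ 0)
    (hD : IsUnit (Dxi D ξ)) :
    ξ ^ 2 • (DxiT D ξ)⁻¹ = D * (Dxi D ξ)⁻¹ * Dᵀ - 1 := by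
  have hDd : IsUnit (Dxi D ξ).det := (Matrix.isUnit_iff_isUnit_det _).mp hD
  have h1 : Dxi D ξ * (Dxi D ξ)⁻¹ = 1 := Matrix.mul_nonsing_inv _ hDd
  have push : D * Dxi D ξ = DxiT D ξ * D := by
    simp [Dxi, DxiT, Matrix.mul_sub, Matrix.sub_mul, Matrix.mul_smul, Matrix.smul_mul,
      Matrix.mul_assoc]
  have key1 : DxiT D ξ * (D * (Dxi D ξ)⁻¹ * Dᵀ - 1) = ξ ^ 2 • 1 := by
    have e1 : DxiT D ξ * (D * (Dxi D ξ)⁻¹ * Dᵀ) = D * Dᵀ := by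
      rw [← Matrix.mul_assoc, ← Matrix.mul_assoc, ← push, Matrix.mul_assoc D, h1,
        Matrix.mul_one]
    rw [Matrix.mul_sub, e1, Matrix.mul_one, DxiT, sub_sub_cancel]
  have hξ2 : (ξ ^ 2)⁻¹ * ξ ^ 2 = 1 := inv_mul_cancel₀ (pow_ne_zero 2 hξ)
  have key1' : DxiT D ξ * ((ξ ^ 2)⁻¹ • (D * (Dxi D ξ)⁻¹ * Dᵀ - 1)) = 1 := by
    rw [Matrix.mul_smul, key1, smul_smul, hξ2, one_smul]
  have hinv : (DxiT D ξ)⁻¹ = (ξ ^ 2)⁻¹ • (D * (Dxi D ξ)⁻¹ * Dᵀ - 1) :=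
    Matrix.inv_eq_right_inv key1'
  rw [hinv, smul_smul, mul_inv_cancel₀ (pow_ne_zero 2 hξ), one_smul]

lemma hhat_blocks (A0 : Matrix (Fin n) (Fin n) ℝ) (A : Fin m → Matrix (Fin n) (Fin n) ℝ)
    (B : Matrix (Fin n) (Fin nu) ℝ) (C : Matrix (Fin ny) (Fin n) ℝ)
    (D : Matrix (Fin ny) (Fin nu) ℝ) {ξ : ℝ} (hξ : ξ ≠ 0) (hD : IsUnit (Dxi D ξ))
    (a : Fin m → ℂ) (ω : ℝ) :
    HhatGen A0 A B C D ξ a ω =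
      fromBlocks
        (AmatGen A0 A a ω + B.map Complex.ofReal * (((Dxi D ξ)⁻¹).map Complex.ofReal *
          ((D.map Complex.ofReal)ᴴ * C.map Complex.ofReal)))
        (B.map Complex.ofReal * (((Dxi D ξ)⁻¹).map Complex.ofReal * (B.map Complex.ofReal)ᴴ))
        ((C.map Complex.ofReal)ᴴ * C.map Complex.ofReal +
          -((C.map Complex.ofReal)ᴴ * D.map Complex.ofReal) *
            (((Dxi D ξ)⁻¹).map Complex.ofReal * ((D.map Complex.ofReal)ᴴ * C.map Complex.ofReal)))
        (-(AmatGen A0 A a ω)ᴴ + -((C.map Complex.ofReal)ᴴ * D.map Complex.ofReal) *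
          (((Dxi D ξ)⁻¹).map Complex.ofReal * (B.map Complex.ofReal)ᴴ)) := by
  have hsum : (∑ i : Fin m, (a i • (Mpos (A i)).map Complex.ofReal
        + (starRingEnd ℂ) (a i) • (Mneg (A i)).map Complex.ofReal))
      = fromBlocks (∑ i : Fin m, a i • (A i).map Complex.ofReal) 0 0
          (∑ i : Fin m, (starRingEnd ℂ) (a i) • (-(A i)ᵀ).map Complex.ofReal) := by
    have hterm : ∀ i : Fin m, a i • (Mpos (A i)).map Complex.ofReal
        + (starRingEnd ℂ) (a i) • (Mneg (A i)).map Complex.ofReal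
        = fromBlocks (a i • (A i).map Complex.ofReal) 0 0
            ((starRingEnd ℂ) (a i) • (-(A i)ᵀ).map Complex.ofReal) := by
      intro i
      rw [Mpos, Mneg, fromBlocks_map, fromBlocks_map]
      simp only [mapC_zero]
      rw [fromBlocks_smul, fromBlocks_smul, fromBlocks_add]
      simp
    rw [Finset.sum_congr rfl fun i _ => hterm i, sum_fromBlocks, Finset.sum_const_zero]
  rw [HhatGen, hsum, Mzero, fromBlocks_map, ← fromBlocks_one, fromBlocks_smul,
    fromBlocks_sub, fromBlocks_sub, fromBlocks_inj]
  have h21 : ξ ^ 2 • (Cᵀ * (DxiT D ξ)⁻¹ * C)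
      = Cᵀ * (D * (Dxi D ξ)⁻¹ * Dᵀ) * C - Cᵀ * C := by
    have hs : ξ ^ 2 • (Cᵀ * (DxiT D ξ)⁻¹ * C) = Cᵀ * (ξ ^ 2 • (DxiT D ξ)⁻¹) * C := by
      rw [Matrix.mul_smul, Matrix.smul_mul]
    rw [hs, dxit_inv_smul D hξ hD, Matrix.mul_sub, Matrix.sub_mul, Matrix.mul_one]
  have hAcH : -(AmatGen A0 A a ω)ᴴ = (Complex.I * ω) • 1 + (A0ᵀ).map Complex.ofReal
      + ∑ i : Fin m, (starRingEnd ℂ) (a i) • ((A i)ᵀ).map Complex.ofReal := by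
    rw [AmatGen]
    rw [conjTranspose_sub, conjTranspose_sub, conjTranspose_smul, conjTranspose_one,
      conjTranspose_sum]
    simp only [conjTranspose_smul, mapC_conjT]
    have : star (Complex.I * (ω : ℂ)) = -(Complex.I * ω) := by
      simp [Complex.star_def, Complex.conj_ofReal]
    rw [this]
    simp only [neg_smul]
    abel
  refine ⟨?_, ?_, ?_, ?_⟩
  · rw [AmatGen]
    simp only [mapC_sub, mapC_mul, mapC_conjT, Matrix.mul_assoc]
    abel
  · simp only [mapC_neg, mapC_mul, mapC_conjT, Matrix.mul_assoc, smul_zero]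
    abel
  · rw [h21]
    simp only [mapC_sub, mapC_mul, mapC_conjT, Matrix.neg_mul, Matrix.mul_assoc, smul_zero]
    abel
  · rw [hAcH]
    simp only [mapC_add, mapC_neg, mapC_mul, mapC_conjT, Matrix.neg_mul, Matrix.mul_assoc,
      mapC_smul, smul_neg, Finset.sum_neg_distrib, smul_zero]
    abel

lemma core_det {N NU NY : ℕ} (z : ℂ) (Ac : Matrix (Fin N) (Fin N) ℂ) (Bc : Matrix (Fin N) (Fin NU) ℂ)
    (Cc : Matrix (Fin NY) (Fin N) ℂ) (Dc : Matrix (Fin NY) (Fin NU) ℂ)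
    (E : Matrix (Fin NU) (Fin NU) ℂ) (hA : IsUnit Ac)
    (hE2 : E * (Dcᴴ * Dc - z • 1) = 1) :
    (fromBlocks (Ac + Bc * (E * (Dcᴴ * Cc))) (Bc * (E * Bcᴴ))
        (Ccᴴ * Cc + -(Ccᴴ * Dc) * (E * (Dcᴴ * Cc))) (-Acᴴ + -(Ccᴴ * Dc) * (E * Bcᴴ))).det
      * (Dcᴴ * Dc - z • 1).det
    = ((Cc * Ac⁻¹ * Bc + Dc)ᴴ * (Cc * Ac⁻¹ * Bc + Dc) - z • 1).det * Ac.det * (-Acᴴ).det := by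
  have hAd : IsUnit Ac.det := (Matrix.isUnit_iff_isUnit_det _).mp hA
  have hAHd : IsUnit Acᴴ.det := by rw [Matrix.det_conjTranspose]; exact isUnit_star.mpr hAd
  have hAinv : Ac * Ac⁻¹ = 1 := Matrix.mul_nonsing_inv _ hAd
  have hAinv' : Ac⁻¹ * Ac = 1 := Matrix.nonsing_inv_mul _ hAd
  have hAH : Acᴴ * Acᴴ⁻¹ = 1 := Matrix.mul_nonsing_inv _ hAHd
  have hAH' : Acᴴ⁻¹ * Acᴴ = 1 := Matrix.nonsing_inv_mul _ hAHd
  set Dx : Matrix (Fin NU) (Fin NU) ℂ := Dcᴴ * Dc - z • 1 with hDxdef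
  set K1 : Matrix (Fin N ⊕ Fin N) (Fin N ⊕ Fin N) ℂ :=
    fromBlocks Ac 0 (Ccᴴ * Cc) (-Acᴴ) with hK1
  set Nn : Matrix (Fin N ⊕ Fin N) (Fin N ⊕ Fin N) ℂ :=
    fromBlocks Ac⁻¹ 0 (Acᴴ⁻¹ * ((Ccᴴ * Cc) * Ac⁻¹)) (-Acᴴ⁻¹) with hNn
  set P : Matrix (Fin N ⊕ Fin N) (Fin NU) ℂ := fromRows Bc (-(Ccᴴ * Dc)) with hP
  set Q : Matrix (Fin NU) (Fin N ⊕ Fin N) ℂ := fromCols (Dcᴴ * Cc) Bcᴴ with hQ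
  have h21 : (Ccᴴ * Cc) * Ac⁻¹ + (-Acᴴ) * (Acᴴ⁻¹ * ((Ccᴴ * Cc) * Ac⁻¹)) = 0 := by
    rw [Matrix.neg_mul, ← Matrix.mul_assoc Acᴴ, hAH, Matrix.one_mul, add_neg_cancel]
  have hKN : K1 * Nn = 1 := by
    rw [hK1, hNn, fromBlocks_multiply]
    simp only [Matrix.mul_zero, Matrix.zero_mul, add_zero, zero_add, hAinv, h21,
      neg_mul_neg, hAH]
    exact fromBlocks_one
  have hblock : fromBlocks (Ac + Bc * (E * (Dcᴴ * Cc))) (Bc * (E * Bcᴴ))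
        (Ccᴴ * Cc + -(Ccᴴ * Dc) * (E * (Dcᴴ * Cc))) (-Acᴴ + -(Ccᴴ * Dc) * (E * Bcᴴ))
      = K1 + P * (E * Q) := by
    rw [hQ, Matrix.mul_fromCols, hP, Matrix.fromRows_mul_fromCols, hK1,
      Matrix.fromBlocks_add]
    congr 1 <;> simp
  have hNP : Nn * P = fromRows (Ac⁻¹ * Bc)
      (Acᴴ⁻¹ * ((Ccᴴ * Cc) * Ac⁻¹) * Bc + Acᴴ⁻¹ * (Ccᴴ * Dc)) := by
    rw [hNn, hP, Matrix.fromBlocks_mul_fromRows]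
    congr 1 <;> simp [Matrix.neg_mul, Matrix.mul_neg]
  have hQNP : Dx + Q * (Nn * P)
      = (Cc * Ac⁻¹ * Bc + Dc)ᴴ * (Cc * Ac⁻¹ * Bc + Dc) - z • 1 := by
    rw [hNP, hQ, Matrix.fromCols_mul_fromRows, hDxdef]
    simp only [conjTranspose_add, conjTranspose_mul, Matrix.conjTranspose_nonsing_inv,
      Matrix.add_mul, Matrix.mul_add, Matrix.mul_assoc]
    abel
  have key : (K1 + P * (E * Q)).det = K1.det * (E.det * (Dx + Q * (Nn * P)).det) := by
    have h1 : K1 + P * (E * Q) = K1 * (1 + Nn * (P * (E * Q))) := by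
      rw [Matrix.mul_add, Matrix.mul_one, ← Matrix.mul_assoc K1 Nn, hKN, Matrix.one_mul]
    rw [h1, det_mul]
    congr 1
    have h2 : Nn * (P * (E * Q)) = (Nn * P) * (E * Q) := by rw [Matrix.mul_assoc]
    rw [h2, Matrix.det_one_add_mul_comm]
    have h3 : (1 : Matrix (Fin NU) (Fin NU) ℂ) + E * Q * (Nn * P)
        = E * (Dx + Q * (Nn * P)) := by
      rw [Matrix.mul_add, hE2, Matrix.mul_assoc]
    rw [h3, det_mul]
  have hEdet : E.det * Dx.det = 1 := by
    have := congrArg Matrix.det hE2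
    rwa [det_mul, det_one] at this
  rw [hblock, key, hQNP, hK1, Matrix.det_fromBlocks_zero₁₂]
  linear_combination (Ac.det * (-Acᴴ).det *
    ((Cc * Ac⁻¹ * Bc + Dc)ᴴ * (Cc * Ac⁻¹ * Bc + Dc) - z • 1).det) * hEdet


/-- `det(G̃* G̃ − ξ² I) = 0 ↔ det Ĥ = 0`, and moreover
`det Ĥ · det D_ξ = det(G̃* G̃ − ξ² I) · det Ã · det(−Ã*)`. -/
theorem singular_value_iff_det_HhatGen [NeZero n] [NeZero nu] [NeZero ny] [NeZero m]
    (A0 : Matrix (Fin n) (Fin n) ℝ) (A : Fin m → Matrix (Fin n) (Fin n) ℝ)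
    (B : Matrix (Fin n) (Fin nu) ℝ) (C : Matrix (Fin ny) (Fin n) ℝ)
    (D : Matrix (Fin ny) (Fin nu) ℝ) (τ : Fin m → ℝ)
    (ξ : ℝ) (hξ : 0 < ξ) (hD : IsUnit (Dxi D ξ)) (ω : ℝ) (a : Fin m → ℂ)
    (hA : IsUnit (AmatGen A0 A a ω)) :
    (((GmatGen A0 A B C D a ω)ᴴ * GmatGen A0 A B C D a ω - ((ξ : ℂ) ^ 2) • 1).det = 0
        ↔ (HhatGen A0 A B C D ξ a ω).det = 0) ∧
      (HhatGen A0 A B C D ξ a ω).det * ((Dxi D ξ).det : ℂ)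
        = ((GmatGen A0 A B C D a ω)ᴴ * GmatGen A0 A B C D a ω - ((ξ : ℂ) ^ 2) • 1).det
            * (AmatGen A0 A a ω).det * (-(AmatGen A0 A a ω)ᴴ).det := by
  set Bc := B.map Complex.ofReal
  set Cc := C.map Complex.ofReal
  set Dc := D.map Complex.ofReal
  set Ec := ((Dxi D ξ)⁻¹).map Complex.ofReal with hEc
  set Ac := AmatGen A0 A a ω with hAc
  have hDd : IsUnit (Dxi D ξ).det := (Matrix.isUnit_iff_isUnit_det _).mp hD
  have hDxc : Dcᴴ * Dc - ((ξ : ℂ) ^ 2) • 1 = (Dxi D ξ).map Complex.ofReal := by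
    rw [Dxi, mapC_sub, mapC_mul, mapC_smul, mapC_one, mapC_conjT]
    norm_cast
  have hE2 : Ec * (Dcᴴ * Dc - ((ξ : ℂ) ^ 2) • 1) = 1 := by
    rw [hDxc, hEc, ← mapC_mul, Matrix.nonsing_inv_mul _ hDd, mapC_one]
  have hGdef : GmatGen A0 A B C D a ω = Cc * Ac⁻¹ * Bc + Dc := rfl
  have hdet := core_det ((ξ : ℂ) ^ 2) Ac Bc Cc Dc Ec hA hE2
  have hcast : ((Dxi D ξ).det : ℂ) = (Dcᴴ * Dc - ((ξ : ℂ) ^ 2) • 1).det := by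
    rw [hDxc]
    exact RingHom.map_det Complex.ofRealHom _
  have hmain : (HhatGen A0 A B C D ξ a ω).det * ((Dxi D ξ).det : ℂ)
      = ((GmatGen A0 A B C D a ω)ᴴ * GmatGen A0 A B C D a ω - ((ξ : ℂ) ^ 2) • 1).det
          * Ac.det * (-Acᴴ).det := by
    rw [hhat_blocks A0 A B C D hξ.ne' hD a ω, hGdef, hcast]
    exact hdet
  refine ⟨?_, hmain⟩
  have hdA : Ac.det ≠ 0 := ((Matrix.isUnit_iff_isUnit_det _).mp hA).ne_zero
  have hAH : IsUnit Acᴴ := by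
    rw [Matrix.isUnit_iff_isUnit_det, Matrix.det_conjTranspose]
    exact isUnit_star.mpr ((Matrix.isUnit_iff_isUnit_det _).mp hA)
  have hdnA : (-Acᴴ).det ≠ 0 := ((Matrix.isUnit_iff_isUnit_det _).mp hAH.neg).ne_zero
  have hdDx : ((Dxi D ξ).det : ℂ) ≠ 0 := by
    exact_mod_cast hDd.ne_zero
  constructor
  · intro hS
    have h0 : (HhatGen A0 A B C D ξ a ω).det * ((Dxi D ξ).det : ℂ) = 0 := by
      rw [hmain, hS, zero_mul, zero_mul]
    exact (mul_eq_zero.mp h0).resolve_right hdDx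
  · intro hH
    have h0 : ((GmatGen A0 A B C D a ω)ᴴ * GmatGen A0 A B C D a ω - ((ξ : ℂ) ^ 2) • 1).det
        * Ac.det * (-Acᴴ).det = 0 := by rw [← hmain, hH, zero_mul]
    rcases mul_eq_zero.mp h0 with h | h
    · rcases mul_eq_zero.mp h with h' | h'
      · exact h'
      · exact absurd h' hdA
    · exact absurd h hdnA
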